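/- Let p be a prime, 0 < s, and let F ⊆ ℤ_p be a closed set. Suppose there is a constant C > 0 such that limsup_{|I|→∞} |F ∩ B ∩ I|/|B ∩ I|^s ≤ C for every closed ball B ⊆ ℤ_p (the limsup taken over intervals of integers I with |I|→∞). Then ℋ_s(F ∩ ℤ) ≤ C · ℋ^s(F), where ℋ_s is the s-counting measure on ℤ and ℋ^s is the s-dimensional Hausdorff measure on ℤ_p. -/

import Mathlib

open MeasureTheory Filter Set Metric
open scoped ENNReal NNReal

noncomputable section

/-- Number of elements of `E` in the integer interval `(M, M+n]`. -/
def cnt (E : Set ℤ) (M : ℤ) (n : ℕ) : ℕ := (E ∩ Set.Ioc M (M + n)).ncard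

/-- The `s`-counting measure `ℋ_s(E) = limsup_{|I|→∞} |E ∩ I| / |I|^s`,
where `I` ranges over integer intervals `(M, N]`. -/
def countingMeasure (s : ℝ) (E : Set ℤ) : ℝ≥0∞ :=
  Filter.atTop.limsup fun n : ℕ => ⨆ M : ℤ, (cnt E M n : ℝ≥0∞) / (n : ℝ≥0∞) ^ s

/-- The upper Banach density `d*(E) = limsup_{|I|→∞} |E ∩ I| / |I|`. -/
def upperBanachDensity (E : Set ℤ) : ℝ≥0∞ := countingMeasure 1 E

variable (p : ℕ) [Fact p.Prime]

instance : MeasurableSpace ℤ_[p] := borel ℤ_[p]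
instance : BorelSpace ℤ_[p] := ⟨rfl⟩

/-- Projection `Π_p(F) = F ∩ ℤ` of a set `F ⊆ ℤ_p`, as a set of integers. -/
def proj (F : Set ℤ_[p]) : Set ℤ := {m : ℤ | (m : ℤ_[p]) ∈ F}

/-- The closed ball of radius `p^{-n}` around `x` in `ℤ_p`. -/
def pball (x : ℤ_[p]) (n : ℕ) : Set ℤ_[p] := Metric.closedBall x ((p : ℝ) ^ (-(n : ℤ)))

/-- `limsup_{|I|→∞} |A ∩ B ∩ I| / |B ∩ I|^s` for sets of integers `A, B`. -/
def relCount (s : ℝ) (A B : Set ℤ) : ℝ≥0∞ :=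
  Filter.atTop.limsup fun n : ℕ => ⨆ M : ℤ, (cnt (A ∩ B) M n : ℝ≥0∞) / (cnt B M n : ℝ≥0∞) ^ s

/-- `η_s(F; x, n) = limsup_{|I|→∞} |F ∩ B_{p^{-n}}(x) ∩ I| / |B_{p^{-n}}(x) ∩ I|^s`. -/
def etaN (s : ℝ) (F : Set ℤ_[p]) (x : ℤ_[p]) (n : ℕ) : ℝ≥0∞ :=
  relCount s (proj p F) (proj p (pball p x n))

/-- The `s`-counting local measure `η_s(F; x) = limsup_{n→∞} η_s(F; x, n)`. -/
def eta (s : ℝ) (F : Set ℤ_[p]) (x : ℤ_[p]) : ℝ≥0∞ :=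
  Filter.atTop.limsup fun n : ℕ => etaN p s F x n

/-- `N_{p^{-n}}(F)`: minimal number of closed balls of radius `p^{-n}` covering `F`. -/
def coverNumber (F : Set ℤ_[p]) (n : ℕ) : ℕ :=
  sInf {k : ℕ | ∃ t : Finset ℤ_[p], t.card = k ∧
    F ⊆ ⋃ x ∈ t, Metric.closedBall x ((p : ℝ) ^ (-(n : ℤ)))}

/-- Upper box-counting dimension of `F ⊆ ℤ_p`. -/
def upperBoxDim (F : Set ℤ_[p]) : ℝ :=
  Filter.atTop.limsup fun n : ℕ => Real.log (coverNumber p F n) / (n * Real.log p)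

/-- Lower box-counting dimension of `F ⊆ ℤ_p`. -/
def lowerBoxDim (F : Set ℤ_[p]) : ℝ :=
  Filter.atTop.liminf fun n : ℕ => Real.log (coverNumber p F n) / (n * Real.log p)

/-- Maximal number of points of `E` in an integer interval of length `n`. -/
def maxCnt (E : Set ℤ) (n : ℕ) : ℕ := sSup {k : ℕ | ∃ M : ℤ, cnt E M n = k}

/-- The counting dimension `D(E) = limsup_{|I|→∞} log |E ∩ I| / log |I|`. -/
def countingDim (E : Set ℤ) : ℝ :=
  Filter.atTop.limsup fun n : ℕ => Real.log (maxCnt E n) / Real.log n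

/-- `θ̲*^s(F) = limsup_n min_{a ∈ G_n} ℋ^s(F ∩ B_{p^{-n}}(a)) / p^{-ns}`, where the
minimum runs over residues `a` whose ball `B_{p^{-n}}(a)` meets `F`. -/
def thetaStar (s : ℝ) (F : Set ℤ_[p]) : ℝ≥0∞ :=
  Filter.atTop.limsup fun n : ℕ =>
    ⨅ (a : ℤ) (_ : (pball p (a : ℤ_[p]) n ∩ F).Nonempty),
      μH[s] (F ∩ pball p (a : ℤ_[p]) n) / (p : ℝ≥0∞) ^ (-((n : ℝ) * s))

/-- A finite arithmetic progression in `ℤ` with common difference `d`. -/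
def IsAPWithDiff (A : Set ℤ) (d : ℤ) : Prop :=
  ∃ a : ℤ, ∃ L : ℕ, A = (fun i : ℕ => a + d * (i : ℤ)) '' {i : ℕ | i < L}

lemma cnt_AP_le (a : ℤ) (q : ℕ) (hq : 0 < q) (M : ℤ) (m : ℕ) :
    cnt {z : ℤ | (q:ℤ) ∣ z - a} M m ≤ m / q + 1 := by
  classical
  have h := Set.ncard_le_ncard_of_injOn (fun z : ℤ => (z - (M+1)).toNat / q)
    (s := {z : ℤ | (q:ℤ) ∣ z - a} ∩ Set.Ioc M (M + m))
    (t := ↑(Finset.range (m / q + 1)))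
    ?_ ?_ (Finset.range (m / q + 1)).finite_toSet
  · simpa only [cnt, Set.ncard_coe_finset, Finset.card_range] using h
  · rintro z ⟨_, hz1, hz2⟩
    simp only [Finset.coe_range, Set.mem_Iio]
    have h1 : (z - (M+1)).toNat ≤ m - 1 := by omega
    have h2 := Nat.div_le_div_right (c := q) h1
    have h3 := Nat.div_le_div_right (c := q) (Nat.sub_le m 1)
    omega
  · rintro z1 ⟨hd1, hI1, hI1'⟩ z2 ⟨hd2, hI2, hI2'⟩ he
    simp only [Set.mem_setOf_eq] at hd1 hd2
    set n1 := (z1 - (M+1)).toNat with hn1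
    set n2 := (z2 - (M+1)).toNat with hn2
    have e1 : (n1 : ℤ) = z1 - (M+1) := Int.toNat_of_nonneg (by omega)
    have e2 : (n2 : ℤ) = z2 - (M+1) := Int.toNat_of_nonneg (by omega)
    have hdvd : (q:ℤ) ∣ (n1:ℤ) - (n2:ℤ) := by
      have := dvd_sub hd1 hd2
      rw [e1, e2]
      simpa using this
    have hq1 := Nat.div_add_mod n1 q
    have hq2 := Nat.div_add_mod n2 q
    have hm1 := Nat.mod_lt n1 hq
    have hm2 := Nat.mod_lt n2 hq
    have he' : n1 / q = n2 / q := by simpa using he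
    rw [he'] at hq1
    have habs : |(n1:ℤ) - (n2:ℤ)| < q := abs_lt.mpr ⟨by omega, by omega⟩
    have := Int.eq_zero_of_abs_lt_dvd hdvd habs
    omega

lemma cnt_count (E : Set ℤ) (M : ℤ) (n : ℕ) :
    (cnt E M n : ℝ≥0∞) = Measure.count (E ∩ Set.Ioc M (M + n)) := by
  have hfin : (E ∩ Set.Ioc M (M + n)).Finite := (Set.finite_Ioc _ _).inter_of_right _
  rw [Measure.count_apply_finite _ hfin, cnt, Set.ncard_eq_toFinset_card _ hfin]

lemma cnt_mono {E E' : Set ℤ} (h : E ⊆ E') (M : ℤ) (n : ℕ) : cnt E M n ≤ cnt E' M n :=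
  Set.ncard_le_ncard (Set.inter_subset_inter_left _ h) ((Set.finite_Ioc _ _).inter_of_right _)

lemma cnt_subadd {ι : Type*} (t : Finset ι) (B : ι → Set ℤ) (A : Set ℤ)
    (hA : A ⊆ ⋃ i ∈ t, B i) (M : ℤ) (m : ℕ) :
    (cnt A M m : ℝ≥0∞) ≤ ∑ i ∈ t, (cnt (A ∩ B i) M m : ℝ≥0∞) := by
  simp only [cnt_count]
  calc Measure.count (A ∩ Set.Ioc M (M+m))
      ≤ Measure.count (⋃ i ∈ t, (A ∩ B i) ∩ Set.Ioc M (M+m)) := by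
        refine measure_mono fun z hz => ?_
        obtain ⟨hzA, hzI⟩ := hz
        obtain ⟨T, hT, hzT⟩ := Set.mem_iUnion₂.mp (hA hzA)
        exact Set.mem_iUnion₂.mpr ⟨T, hT, ⟨hzA, hzT⟩, hzI⟩
    _ ≤ ∑ i ∈ t, Measure.count ((A ∩ B i) ∩ Set.Ioc M (M+m)) := measure_biUnion_finset_le _ _

lemma cnt_AP_cast_le (a : ℤ) (q : ℕ) (hq : 0 < q) (M : ℤ) (m : ℕ) :
    (cnt {z : ℤ | (q:ℤ) ∣ z - a} M m : ℝ≥0∞) ≤ ((m : ℝ≥0∞) + q) / q := by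
  have h := cnt_AP_le a q hq M m
  have hq0 : (q : ℝ≥0∞) ≠ 0 := by exact_mod_cast hq.ne'
  have hqt : (q : ℝ≥0∞) ≠ ∞ := ENNReal.natCast_ne_top q
  rw [ENNReal.le_div_iff_mul_le (Or.inl hq0) (Or.inl hqt)]
  calc (cnt {z : ℤ | (q:ℤ) ∣ z - a} M m : ℝ≥0∞) * q ≤ ((m / q + 1 : ℕ) : ℝ≥0∞) * q :=
        mul_le_mul_left (by exact_mod_cast h) _
    _ = ((m / q : ℕ) : ℝ≥0∞) * q + q := by push_cast; ring
    _ ≤ (m : ℝ≥0∞) + q := by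
        gcongr
        exact_mod_cast Nat.div_mul_le_self m q

lemma enn_limsup_add_le (u v : ℕ → ℝ≥0∞) :
    Filter.atTop.limsup (fun m => u m + v m) ≤
      Filter.atTop.limsup u + Filter.atTop.limsup v := by
  set a := Filter.atTop.limsup u with ha
  set b := Filter.atTop.limsup v with hb
  rcases eq_or_ne a ⊤ with h | hat
  · rw [h, top_add]; exact le_top
  rcases eq_or_ne b ⊤ with h | hbt
  · rw [h, add_top]; exact le_top
  refine ENNReal.le_of_forall_pos_le_add fun ε hε _ => ?_
  have hu : ∀ᶠ m in Filter.atTop, u m < a + (ε / 2 : ℝ≥0) :=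
    Filter.eventually_lt_of_limsup_lt
      (ENNReal.lt_add_right hat (by exact_mod_cast (half_pos hε).ne'))
  have hv : ∀ᶠ m in Filter.atTop, v m < b + (ε / 2 : ℝ≥0) :=
    Filter.eventually_lt_of_limsup_lt
      (ENNReal.lt_add_right hbt (by exact_mod_cast (half_pos hε).ne'))
  refine Filter.limsup_le_of_le (by isBoundedDefault) ?_
  filter_upwards [hu, hv] with m h1 h2
  calc u m + v m ≤ (a + (ε / 2 : ℝ≥0)) + (b + (ε / 2 : ℝ≥0)) :=
        add_le_add h1.le h2.le
    _ = a + b + ((ε / 2 + ε / 2 : ℝ≥0) : ℝ≥0∞) := by push_cast; ring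
    _ = a + b + (ε : ℝ≥0∞) := by rw [add_halves]

lemma limsup_sum_le {ι : Type*} (t : Finset ι) (f : ι → ℕ → ℝ≥0∞) :
    Filter.atTop.limsup (fun m => ∑ i ∈ t, f i m) ≤ ∑ i ∈ t, Filter.atTop.limsup (f i) := by
  classical
  induction t using Finset.cons_induction with
  | empty => simp
  | cons a t ha ih =>
      simp only [Finset.sum_cons]
      calc Filter.atTop.limsup (fun m => f a m + ∑ i ∈ t, f i m)
          ≤ Filter.atTop.limsup (f a) + Filter.atTop.limsup (fun m => ∑ i ∈ t, f i m) :=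
            enn_limsup_add_le _ _
        _ ≤ _ := by gcongr
















lemma mem_pball_iff (x z : ℤ_[p]) (k : ℕ) :
    z ∈ pball p x k ↔ ‖z - x‖ ≤ (p : ℝ) ^ (-(k:ℤ)) := by
  rw [pball, Metric.mem_closedBall, dist_eq_norm]

lemma proj_pball_eq {x : ℤ_[p]} {k : ℕ} {a : ℤ} (ha : a ∈ proj p (pball p x k)) :
    proj p (pball p x k) = {z : ℤ | ((p:ℤ)^k) ∣ z - a} := by
  have ha' : ‖(a : ℤ_[p]) - x‖ ≤ (p : ℝ) ^ (-(k:ℤ)) := (mem_pball_iff p x _ k).mp ha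
  ext z
  simp only [proj, Set.mem_setOf_eq, mem_pball_iff]
  constructor
  · intro hz
    rw [← PadicInt.norm_int_le_pow_iff_dvd]
    have : ((z - a : ℤ) : ℤ_[p]) = ((z:ℤ_[p]) - x) + -((a:ℤ_[p]) - x) := by push_cast; ring
    rw [this]
    refine le_trans (PadicInt.nonarchimedean _ _) (max_le hz ?_)
    rwa [norm_neg]
  · intro hz
    rw [← PadicInt.norm_int_le_pow_iff_dvd] at hz
    have : ((z:ℤ_[p]) - x) = ((z - a : ℤ) : ℤ_[p]) + ((a:ℤ_[p]) - x) := by push_cast; ring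
    rw [this]
    exact le_trans (PadicInt.nonarchimedean _ _) (max_le hz ha')

lemma perball (s : ℝ) (hs : 0 < s) (F : Set ℤ_[p]) (C : ℝ≥0) (hC : 0 < C)
    (hbd : ∀ (x : ℤ_[p]) (n : ℕ), etaN p s F x n ≤ (C : ℝ≥0∞)) (x : ℤ_[p]) (k : ℕ) :
    Filter.atTop.limsup (fun m : ℕ =>
        ⨆ M : ℤ, (cnt (proj p F ∩ proj p (pball p x k)) M m : ℝ≥0∞) / (m:ℝ≥0∞) ^ s)
      ≤ (C:ℝ≥0∞) * (((p:ℝ≥0∞)^k)⁻¹) ^ s := by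
  have hp2 : 2 ≤ p := (Fact.out : p.Prime).two_le
  rcases Set.eq_empty_or_nonempty (proj p (pball p x k)) with hemp | ⟨a, ha⟩
  · have hz : (fun m : ℕ =>
        ⨆ M : ℤ, (cnt (proj p F ∩ proj p (pball p x k)) M m : ℝ≥0∞) / (m:ℝ≥0∞) ^ s)
        = fun _ => (0:ℝ≥0∞) := by
      funext m
      simp [hemp, cnt]
    rw [hz, limsup_const]
    exact zero_le
  -- notation
  set A := proj p F with hA
  set P := proj p (pball p x k) with hPdef
  have hP : P = {z : ℤ | ((p:ℤ)^k) ∣ z - a} := proj_pball_eq p ha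
  set q : ℕ := p ^ k with hqdef
  have hq : 0 < q := pow_pos (by omega) k
  have hQcast : ((q:ℝ≥0∞)) = (p:ℝ≥0∞)^k := by rw [hqdef]; push_cast; ring
  have hQ0 : (q : ℝ≥0∞) ≠ 0 := by exact_mod_cast hq.ne'
  have hQt : (q : ℝ≥0∞) ≠ ∞ := ENNReal.natCast_ne_top q
  set b : ℝ≥0∞ := (C:ℝ≥0∞) * (((p:ℝ≥0∞)^k)⁻¹) ^ s with hbdef
  have hb0 : b ≠ 0 := by
    apply mul_ne_zero (by exact_mod_cast hC.ne')
    exact (ENNReal.rpow_pos (ENNReal.inv_pos.mpr (by rw [← hQcast]; exact hQt))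
      (by rw [← hQcast]; simp [ENNReal.inv_ne_top, hQ0])).ne'
  have hbt : b ≠ ∞ := by
    apply ENNReal.mul_ne_top ENNReal.coe_ne_top
    exact ENNReal.rpow_ne_top_of_nonneg hs.le (by rw [← hQcast]; simp [hQ0])
  -- main step: for every finite c > 1
  have H : ∀ c : ℝ≥0∞, 1 < c → c ≠ ∞ →
      Filter.atTop.limsup (fun m : ℕ =>
          ⨆ M : ℤ, (cnt (A ∩ P) M m : ℝ≥0∞) / (m:ℝ≥0∞) ^ s) ≤ c ^ s * b := by
    intro c hc1 hct
    -- find δ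
    obtain ⟨δ, hδ0, hδc⟩ : ∃ δ : ℝ≥0, 0 < δ ∧ 1 + (δ:ℝ≥0∞) ≤ c := by
      refine ⟨c.toNNReal - 1, ?_, ?_⟩
      · have h1c : 1 < c.toNNReal := by
          rw [← ENNReal.one_lt_coe_iff, ENNReal.coe_toNNReal hct]; exact hc1
        exact tsub_pos_of_lt h1c
      · have h1c : 1 ≤ c.toNNReal := by
          rw [← ENNReal.one_le_coe_iff, ENNReal.coe_toNNReal hct]; exact hc1.le
        calc (1:ℝ≥0∞) + ((c.toNNReal - 1 : ℝ≥0) : ℝ≥0∞)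
            = ((1 + (c.toNNReal - 1) : ℝ≥0) : ℝ≥0∞) := by push_cast; ring
          _ = ((c.toNNReal : ℝ≥0) : ℝ≥0∞) := by rw [add_tsub_cancel_of_le h1c]
          _ ≤ c := le_of_eq (ENNReal.coe_toNNReal hct)
    -- eventual pointwise bound
    have hev : ∀ᶠ m : ℕ in Filter.atTop,
        (⨆ M : ℤ, (cnt (A ∩ P) M m : ℝ≥0∞) / (m:ℝ≥0∞) ^ s)
          ≤ (c ^ s * (((p:ℝ≥0∞)^k)⁻¹) ^ s) *
            ⨆ M : ℤ, (cnt (A ∩ P) M m : ℝ≥0∞) / (cnt P M m : ℝ≥0∞) ^ s := by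
      filter_upwards [Filter.eventually_ge_atTop (max 1 (⌈(q:ℝ≥0)/δ⌉₊))] with m hm
      have hm1 : 1 ≤ m := le_trans (le_max_left _ _) hm
      have hm0 : ((m:ℝ≥0∞)) ≠ 0 := by exact_mod_cast (by omega : m ≠ 0)
      have hmt : ((m:ℝ≥0∞)) ≠ ∞ := ENNReal.natCast_ne_top m
      have hqm : (q:ℝ≥0∞) ≤ (δ:ℝ≥0∞) * m := by
        have : ((q:ℝ≥0)/δ) ≤ (m:ℝ≥0) := by
          exact_mod_cast Nat.ceil_le.mp (le_trans (le_max_right _ _) hm)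
        have h2 : (q:ℝ≥0) ≤ δ * m := by
          rw [div_le_iff₀ hδ0] at this
          simpa [mul_comm] using this
        exact_mod_cast h2
      refine iSup_le fun M => ?_
      rcases Nat.eq_zero_or_pos (cnt P M m) with hd0 | hdpos
      · have : cnt (A ∩ P) M m = 0 :=
          Nat.le_zero.mp (hd0 ▸ cnt_mono Set.inter_subset_right M m)
        simp [this]
      -- d1 > 0 case
      have hd1ne : ((cnt P M m : ℝ≥0∞)) ≠ 0 := by exact_mod_cast hdpos.ne'
      have hd1t : ((cnt P M m : ℝ≥0∞)) ≠ ∞ := ENNReal.natCast_ne_top _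
      have hds0 : ((cnt P M m : ℝ≥0∞)) ^ s ≠ 0 :=
        (ENNReal.rpow_pos (pos_iff_ne_zero.mpr hd1ne) hd1t).ne'
      have hdst : ((cnt P M m : ℝ≥0∞)) ^ s ≠ ∞ := ENNReal.rpow_ne_top_of_nonneg hs.le hd1t
      -- bound cnt P
      have hcntP : (cnt P M m : ℝ≥0∞) * q ≤ c * m := by
        have h1 : (cnt P M m : ℝ≥0∞) ≤ ((m : ℝ≥0∞) + q) / q := by
          rw [hP]
          have := cnt_AP_cast_le a q hq M m
          simpa [hqdef] using this
        calc (cnt P M m : ℝ≥0∞) * q ≤ (((m : ℝ≥0∞) + q) / q) * q :=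
              mul_le_mul_left h1 _
          _ = (m : ℝ≥0∞) + q := ENNReal.div_mul_cancel hQ0 hQt
          _ ≤ (m : ℝ≥0∞) + δ * m := add_le_add_right hqm _
          _ = (1 + (δ:ℝ≥0∞)) * m := by ring
          _ ≤ c * m := mul_le_mul_left hδc _
      have hdm : (cnt P M m : ℝ≥0∞) / m ≤ c * ((p:ℝ≥0∞)^k)⁻¹ := by
        have h3 : (cnt P M m : ℝ≥0∞) ≤ c * m / q := by
          rw [ENNReal.le_div_iff_mul_le (Or.inl hQ0) (Or.inl hQt)]
          exact hcntP
        rw [← hQcast, ENNReal.div_le_iff_le_mul (Or.inl hm0) (Or.inl hmt)]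
        refine h3.trans (le_of_eq ?_)
        rw [div_eq_mul_inv]
        ring
      calc (cnt (A ∩ P) M m : ℝ≥0∞) / (m:ℝ≥0∞) ^ s
          = ((cnt (A ∩ P) M m : ℝ≥0∞) / (cnt P M m : ℝ≥0∞) ^ s)
              * ((cnt P M m : ℝ≥0∞) ^ s / (m:ℝ≥0∞) ^ s) := by
            rw [div_eq_mul_inv, div_eq_mul_inv, div_eq_mul_inv
              ((cnt P M m : ℝ≥0∞) ^ s), mul_assoc,
              ← mul_assoc (((cnt P M m : ℝ≥0∞)) ^ s)⁻¹,
              ENNReal.inv_mul_cancel hds0 hdst, one_mul]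
        _ ≤ ((cnt (A ∩ P) M m : ℝ≥0∞) / (cnt P M m : ℝ≥0∞) ^ s)
              * (c ^ s * (((p:ℝ≥0∞)^k)⁻¹) ^ s) := by
            refine mul_le_mul_right ?_ _
            rw [← ENNReal.div_rpow_of_nonneg _ _ hs.le,
              ← ENNReal.mul_rpow_of_nonneg _ _ hs.le]
            exact ENNReal.rpow_le_rpow hdm hs.le
        _ ≤ (c ^ s * (((p:ℝ≥0∞)^k)⁻¹) ^ s) *
              ⨆ M' : ℤ, (cnt (A ∩ P) M' m : ℝ≥0∞) / (cnt P M' m : ℝ≥0∞) ^ s := by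
            rw [mul_comm]
            exact mul_le_mul_right (le_iSup (fun M' : ℤ =>
              (cnt (A ∩ P) M' m : ℝ≥0∞) / (cnt P M' m : ℝ≥0∞) ^ s) M) _
    -- take limsup
    have hconst_ne_top : c ^ s * (((p:ℝ≥0∞)^k)⁻¹) ^ s ≠ ∞ :=
      ENNReal.mul_ne_top (ENNReal.rpow_ne_top_of_nonneg hs.le hct)
        (ENNReal.rpow_ne_top_of_nonneg hs.le (by rw [← hQcast]; simp [hQ0]))
    calc Filter.atTop.limsup (fun m : ℕ =>
            ⨆ M : ℤ, (cnt (A ∩ P) M m : ℝ≥0∞) / (m:ℝ≥0∞) ^ s)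
        ≤ Filter.atTop.limsup (fun m : ℕ =>
            (c ^ s * (((p:ℝ≥0∞)^k)⁻¹) ^ s) *
              ⨆ M : ℤ, (cnt (A ∩ P) M m : ℝ≥0∞) / (cnt P M m : ℝ≥0∞) ^ s) :=
          Filter.limsup_le_limsup hev
      _ = (c ^ s * (((p:ℝ≥0∞)^k)⁻¹) ^ s) * Filter.atTop.limsup (fun m : ℕ =>
            ⨆ M : ℤ, (cnt (A ∩ P) M m : ℝ≥0∞) / (cnt P M m : ℝ≥0∞) ^ s) :=
          ENNReal.limsup_const_mul_of_ne_top hconst_ne_top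
      _ ≤ (c ^ s * (((p:ℝ≥0∞)^k)⁻¹) ^ s) * (C:ℝ≥0∞) := by
          refine mul_le_mul_right ?_ _
          exact hbd x k
      _ = c ^ s * b := by rw [hbdef]; ring
  -- conclude
  refine ENNReal.le_of_forall_pos_le_add fun ε hε hblt => ?_
  set c : ℝ≥0∞ := ((b + ε) / b) ^ (1/s) with hcdef
  have hbε : b < b + ε := ENNReal.lt_add_right hbt (by exact_mod_cast hε.ne')
  have hratio1 : 1 < (b + ε) / b := by
    rw [ENNReal.lt_div_iff_mul_lt (Or.inl hb0) (Or.inl hbt), one_mul]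
    exact hbε
  have hratiot : (b + ε) / b ≠ ∞ :=
    (ENNReal.div_lt_top (ENNReal.add_ne_top.mpr ⟨hbt, ENNReal.coe_ne_top⟩) hb0).ne
  have hc1 : 1 < c := ENNReal.one_lt_rpow hratio1 (by positivity)
  have hct : c ≠ ∞ := ENNReal.rpow_ne_top_of_nonneg (by positivity) hratiot
  have hcs : c ^ s = (b + ε) / b := by
    rw [hcdef, ← ENNReal.rpow_mul, one_div, inv_mul_cancel₀ hs.ne', ENNReal.rpow_one]
  calc Filter.atTop.limsup (fun m : ℕ =>
          ⨆ M : ℤ, (cnt (A ∩ P) M m : ℝ≥0∞) / (m:ℝ≥0∞) ^ s) ≤ c ^ s * b := H c hc1 hct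
    _ = ((b + ε) / b) * b := by rw [hcs]
    _ = b + ε := ENNReal.div_mul_cancel hb0 hbt

lemma cover_bound (s : ℝ) (hs : 0 < s) (F : Set ℤ_[p]) (C : ℝ≥0) (hC : 0 < C)
    (hbd : ∀ (x : ℤ_[p]) (n : ℕ), etaN p s F x n ≤ (C : ℝ≥0∞))
    {ι : Type} (t : Finset ι) (x : ι → ℤ_[p]) (k : ι → ℕ)
    (hcov : F ⊆ ⋃ i ∈ t, pball p (x i) (k i)) :
    countingMeasure s (proj p F) ≤
      ∑ i ∈ t, (C:ℝ≥0∞) * (((p:ℝ≥0∞)^(k i))⁻¹) ^ s := by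
  have hproj : proj p F ⊆ ⋃ i ∈ t, proj p (pball p (x i) (k i)) := by
    intro z hz
    obtain ⟨T, hT, h⟩ := Set.mem_iUnion₂.mp (hcov hz)
    exact Set.mem_iUnion₂.mpr ⟨T, hT, h⟩
  have hpoint : ∀ m : ℕ,
      (⨆ M : ℤ, (cnt (proj p F) M m : ℝ≥0∞) / (m:ℝ≥0∞) ^ s)
        ≤ ∑ i ∈ t, ⨆ M : ℤ,
            (cnt (proj p F ∩ proj p (pball p (x i) (k i))) M m : ℝ≥0∞) / (m:ℝ≥0∞) ^ s := by
    intro m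
    refine iSup_le fun M => ?_
    calc (cnt (proj p F) M m : ℝ≥0∞) / (m:ℝ≥0∞) ^ s
        ≤ (∑ i ∈ t, (cnt (proj p F ∩ proj p (pball p (x i) (k i))) M m : ℝ≥0∞))
            / (m:ℝ≥0∞) ^ s := by
          gcongr
          exact cnt_subadd t _ _ hproj M m
      _ = ∑ i ∈ t, (cnt (proj p F ∩ proj p (pball p (x i) (k i))) M m : ℝ≥0∞)
            / (m:ℝ≥0∞) ^ s := by
          simp only [div_eq_mul_inv, Finset.sum_mul]
      _ ≤ _ := Finset.sum_le_sum fun i _ => le_iSup (fun M' : ℤ =>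
          (cnt (proj p F ∩ proj p (pball p (x i) (k i))) M' m : ℝ≥0∞) / (m:ℝ≥0∞) ^ s) M
  calc countingMeasure s (proj p F)
      ≤ Filter.atTop.limsup (fun m : ℕ => ∑ i ∈ t, ⨆ M : ℤ,
          (cnt (proj p F ∩ proj p (pball p (x i) (k i))) M m : ℝ≥0∞) / (m:ℝ≥0∞) ^ s) :=
        Filter.limsup_le_limsup (Filter.Eventually.of_forall hpoint)
    _ ≤ ∑ i ∈ t, Filter.atTop.limsup (fun m : ℕ => ⨆ M : ℤ,
          (cnt (proj p F ∩ proj p (pball p (x i) (k i))) M m : ℝ≥0∞) / (m:ℝ≥0∞) ^ s) :=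
        limsup_sum_le t _
    _ ≤ _ := Finset.sum_le_sum fun i _ => perball p s hs F C hC hbd (x i) (k i)

lemma hW_exp (s : ℝ) (k : ℕ) :
    (((p:ℝ≥0∞)^k)⁻¹) ^ s = ((((p:ℝ≥0∞))⁻¹ ^ s : ℝ≥0∞))^k := by
  rw [ENNReal.inv_pow, ← ENNReal.rpow_natCast ((p:ℝ≥0∞))⁻¹ k, ← ENNReal.rpow_mul,
    mul_comm, ENNReal.rpow_mul, ENNReal.rpow_natCast]


lemma pball_emetric (y : ℤ_[p]) (k : ℕ) :
    pball p y k = EMetric.closedBall y (((p:ℝ≥0∞)^k)⁻¹) := by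
  have hp0 : (0:ℝ) < (p:ℝ)^(-(k:ℤ)) := by
    have hp : (0:ℝ) < p := by exact_mod_cast (Fact.out : p.Prime).pos
    positivity
  have hp : (0:ℝ) < p := by exact_mod_cast (Fact.out : p.Prime).pos
  rw [pball, ← Metric.emetric_closedBall hp0.le]
  congr 1
  rw [zpow_neg, zpow_natCast]
  rw [ENNReal.ofReal_inv_of_pos (pow_pos hp k), ENNReal.ofReal_pow hp.le]
  norm_num

lemma edist_padic (z y : ℤ_[p]) (hzy : z ≠ y) :
    ∃ j : ℕ, edist z y = (((p:ℝ≥0∞))^j)⁻¹ := by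
  have hz : z - y ≠ 0 := sub_ne_zero.mpr hzy
  refine ⟨(z - y).valuation, ?_⟩
  have hnorm : ‖z - y‖ = (p:ℝ) ^ (-((z - y).valuation : ℤ)) :=
    PadicInt.norm_eq_zpow_neg_valuation hz
  have hdist : dist z y = ((p:ℝ) ^ ((z - y).valuation))⁻¹ := by
    rw [dist_eq_norm, hnorm, zpow_neg, zpow_natCast]
  have hp : (0:ℝ) < p := by exact_mod_cast (Fact.out : p.Prime).pos
  rw [edist_dist, hdist, ENNReal.ofReal_inv_of_pos (pow_pos hp _),
    ENNReal.ofReal_pow hp.le]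
  norm_num

lemma subset_ball (s : ℝ) (hs : 0 < s) (S : Set ℤ_[p]) (ε : ℝ≥0∞) (hε : 0 < ε) :
    ∃ (x : ℤ_[p]) (k : ℕ), S ⊆ pball p x k ∧
      (((p:ℝ≥0∞)^k)⁻¹) ^ s ≤ EMetric.diam S ^ s + ε := by
  have hp2 : 2 ≤ p := (Fact.out : p.Prime).two_le
  have hp1 : (1:ℝ≥0∞) < p := by exact_mod_cast (by omega : 1 < p)
  have hr1 : ((p:ℝ≥0∞))⁻¹ ^ s < 1 :=
    ENNReal.rpow_lt_one (ENNReal.inv_lt_one.mpr hp1) hs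
  -- find k₀ with small weight
  obtain ⟨k₀, hk₀⟩ : ∃ k₀ : ℕ, (((p:ℝ≥0∞)^k₀)⁻¹) ^ s ≤ ε := by
    have := ENNReal.tendsto_pow_atTop_nhds_zero_of_lt_one hr1
    have hev := this.eventually_le_const hε
    obtain ⟨k₀, hk₀⟩ := hev.exists
    exact ⟨k₀, by rw [hW_exp]; exact hk₀⟩
  rcases S.eq_empty_or_nonempty with rfl | ⟨x0, hx0⟩
  · exact ⟨0, k₀, by simp, le_trans hk₀ le_add_self⟩
  rcases eq_or_ne (EMetric.diam S) 0 with hd | hd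
  · refine ⟨x0, k₀, ?_, le_trans hk₀ le_add_self⟩
    intro z hz
    have : edist z x0 = 0 := le_antisymm
      (le_trans (EMetric.edist_le_diam_of_mem hz hx0) (le_of_eq hd)) zero_le
    have hzx : z = x0 := by
      rwa [edist_eq_zero] at this
    rw [pball_emetric, hzx]
    exact EMetric.mem_closedBall_self
  -- positive diameter
  have hex : ∃ k : ℕ, (((p:ℝ≥0∞))^k)⁻¹ ≤ EMetric.diam S := by
    have hr1' : ((p:ℝ≥0∞))⁻¹ < 1 := ENNReal.inv_lt_one.mpr hp1
    have := ENNReal.tendsto_pow_atTop_nhds_zero_of_lt_one hr1'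
    have hev := this.eventually_le_const (pos_iff_ne_zero.mpr hd)
    obtain ⟨k, hk⟩ := hev.exists
    exact ⟨k, by rwa [← ENNReal.inv_pow] at hk⟩
  classical
  set k := Nat.find hex with hkdef
  have hkle : (((p:ℝ≥0∞))^k)⁻¹ ≤ EMetric.diam S := Nat.find_spec hex
  refine ⟨x0, k, ?_, ?_⟩
  · intro z hz
    rw [pball_emetric, EMetric.closedBall, Metric.mem_closedEBall]
    rcases eq_or_ne z x0 with rfl | hzx
    · simp
    obtain ⟨j, hj⟩ := edist_padic p z x0 hzx
    rw [hj]
    by_contra hcon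
    push_neg at hcon
    have hpj : ((p:ℝ≥0∞))^j < (p:ℝ≥0∞)^k := ENNReal.inv_lt_inv.mp hcon
    have hjk : j < k := by
      by_contra hge
      push_neg at hge
      exact absurd (pow_le_pow_right₀ (le_of_lt hp1) hge) (not_le.mpr hpj)
    have hmin : ¬ ((((p:ℝ≥0∞))^j)⁻¹ ≤ EMetric.diam S) := Nat.find_min hex hjk
    exact absurd (le_trans (le_of_eq hj.symm) (EMetric.edist_le_diam_of_mem hz hx0)) hmin
  · exact le_trans (ENNReal.rpow_le_rpow hkle hs.le) le_self_add

/-- If `F ⊆ ℤ_p` is closed and `limsup_{|I|→∞} |F ∩ B ∩ I| / |B ∩ I|^s ≤ C` for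
every closed ball `B`, then `ℋ_s(F ∩ ℤ) ≤ C · ℋ^s(F)`. -/
theorem countingMeasure_le_const_mul_hausdorff (s : ℝ) (hs : 0 < s)
    (F : Set ℤ_[p]) (hF : IsClosed F) (C : ℝ≥0) (hC : 0 < C)
    (hbd : ∀ (x : ℤ_[p]) (n : ℕ), etaN p s F x n ≤ (C : ℝ≥0∞)) :
    countingMeasure s (proj p F) ≤ (C : ℝ≥0∞) * μH[s] F := by
  classical
  have hC0 : (C:ℝ≥0∞) ≠ 0 := by exact_mod_cast hC.ne'
  rcases eq_or_ne (μH[s] F) ∞ with htop | hfin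
  · rw [htop, ENNReal.mul_top hC0]; exact le_top
  refine ENNReal.le_of_forall_pos_le_add fun ε hε _ => ?_
  set ε' : ℝ≥0 := ε / (2 * C) with hε'def
  have hε'0 : 0 < ε' := by
    apply div_pos hε
    positivity
  have hε'ne : ((ε':ℝ≥0∞)) ≠ 0 := by exact_mod_cast hε'0.ne'
  -- extract a cover with tsum close to the Hausdorff measure
  have hinf : (⨅ (t : ℕ → Set ℤ_[p]) (_ : F ⊆ ⋃ n, t n)
      (_ : ∀ n, EMetric.diam (t n) ≤ 1),
        ∑' n, ⨆ _ : (t n).Nonempty, EMetric.diam (t n) ^ s) ≤ μH[s] F := by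
    rw [MeasureTheory.Measure.hausdorffMeasure_apply]
    exact le_iSup₂_of_le 1 one_pos le_rfl
  have hlt2 : (⨅ (t : ℕ → Set ℤ_[p]) (_ : F ⊆ ⋃ n, t n)
      (_ : ∀ n, EMetric.diam (t n) ≤ 1),
        ∑' n, ⨆ _ : (t n).Nonempty, EMetric.diam (t n) ^ s) < μH[s] F + ε' :=
    lt_of_le_of_lt hinf (ENNReal.lt_add_right hfin hε'ne)
  obtain ⟨t, ht⟩ := iInf_lt_iff.mp hlt2
  obtain ⟨hcov, ht⟩ := iInf_lt_iff.mp ht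
  obtain ⟨hdiam, hsum⟩ := iInf_lt_iff.mp ht
  -- choose covering balls
  have hballs : ∀ n : ℕ, ∃ (x : ℤ_[p]) (k : ℕ), t n ⊆ pball p x k ∧
      (((p:ℝ≥0∞)^k)⁻¹) ^ s ≤ (⨆ _ : (t n).Nonempty, EMetric.diam (t n) ^ s)
        + (ε':ℝ≥0∞) * (2⁻¹:ℝ≥0∞)^(n+1) := by
    intro n
    have hslack : (0:ℝ≥0∞) < (ε':ℝ≥0∞) * (2⁻¹:ℝ≥0∞)^(n+1) := by
      apply ENNReal.mul_pos hε'ne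
      exact (pow_ne_zero _ (by norm_num))
    obtain ⟨x, k, h1, h2⟩ := subset_ball p s hs (t n) _ hslack
    refine ⟨x, k, h1, le_trans h2 (add_le_add ?_ le_rfl)⟩
    rcases (t n).eq_empty_or_nonempty with he | hne
    · rw [he, EMetric.diam, Metric.ediam_empty, ENNReal.zero_rpow_of_pos hs]
      exact zero_le
    · rw [iSup_pos hne]
  choose x k hsub hwt using hballs
  -- compactness: finite subcover
  have hp : (0:ℝ) < p := by exact_mod_cast (Fact.out : p.Prime).pos
  have hopen : ∀ n, IsOpen (pball p (x n) (k n)) := by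
    intro n
    rw [pball]
    exact IsUltrametricDist.isOpen_closedBall _ (ne_of_gt (by positivity))
  obtain ⟨u, hu⟩ := (hF.isCompact).elim_finite_subcover (fun n => pball p (x n) (k n))
    hopen (subset_trans hcov (Set.iUnion_mono fun n => hsub n))
  have hgeo : (∑' n : ℕ, (2⁻¹:ℝ≥0∞)^(n+1)) = 1 := by
    simp only [pow_succ]
    rw [ENNReal.tsum_mul_right, ENNReal.tsum_geometric, ENNReal.one_sub_inv_two,
      inv_inv]
    exact ENNReal.mul_inv_cancel (by norm_num) (by norm_num) -- 2 * 2⁻¹?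
  have hkey : (C:ℝ≥0∞) * ((ε':ℝ≥0∞) + (ε':ℝ≥0∞)) = (ε:ℝ≥0∞) := by
    rw [← ENNReal.coe_add, ← ENNReal.coe_mul, ENNReal.coe_inj]
    rw [hε'def]
    field_simp
    ring
  calc countingMeasure s (proj p F)
      ≤ ∑ n ∈ u, (C:ℝ≥0∞) * (((p:ℝ≥0∞)^(k n))⁻¹) ^ s :=
        cover_bound p s hs F C hC hbd u x k hu
    _ = (C:ℝ≥0∞) * ∑ n ∈ u, (((p:ℝ≥0∞)^(k n))⁻¹) ^ s := by rw [Finset.mul_sum]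
    _ ≤ (C:ℝ≥0∞) * ∑' n : ℕ, ((⨆ _ : (t n).Nonempty, EMetric.diam (t n) ^ s)
          + (ε':ℝ≥0∞) * (2⁻¹:ℝ≥0∞)^(n+1)) := by
        refine mul_le_mul_right ?_ _
        refine le_trans (Finset.sum_le_sum fun n _ => hwt n) ?_
        exact ENNReal.sum_le_tsum u
    _ = (C:ℝ≥0∞) * ((∑' n : ℕ, ⨆ _ : (t n).Nonempty, EMetric.diam (t n) ^ s)
          + (ε':ℝ≥0∞)) := by
        rw [ENNReal.tsum_add, ENNReal.tsum_mul_left, hgeo, mul_one]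
    _ ≤ (C:ℝ≥0∞) * ((μH[s] F + (ε':ℝ≥0∞)) + (ε':ℝ≥0∞)) := by
        refine mul_le_mul_right (add_le_add hsum.le le_rfl) _
    _ = (C:ℝ≥0∞) * μH[s] F + (C:ℝ≥0∞) * ((ε':ℝ≥0∞) + (ε':ℝ≥0∞)) := by ring
    _ = (C:ℝ≥0∞) * μH[s] F + ε := by rw [hkey]


end
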